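/- Let G be the directed path of length ℓ, with vertices v_0, v_1, …, v_ℓ and edges (v_i, v_{i+1}) for 0 ≤ i < ℓ. Then the associative spectrum of the graph algebra A(G) satisfies: s_n(A(G)) = t_ℓ(n) if n ≤ ℓ+1, and s_n(A(G)) = t_ℓ(n) + 1 if n ≥ ℓ+2, where t_h(n) denotes the number of DFS trees of size n of height at most h. -/

import Mathlib

namespace AssocSpec

/-- Bracketings of products `x₁ x₂ ⋯ xₙ` represented as binary trees whose
leaves, read from left to right, are the variables `x₁, …, xₙ`. -/
inductive BTree : Type
  | leaf : BTree
  | node : BTree → BTree → BTree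

namespace BTree

/-- The size of a bracketing: its number of variables (leaves). -/
def size : BTree → ℕ
  | leaf => 1
  | node l r => l.size + r.size

/-- Evaluate a bracketing in a magma `(A, op)`, the leaves taking the values
`f k, f (k+1), …` from left to right. -/
def evalFrom {A : Type*} (op : A → A → A) : BTree → (ℕ → A) → ℕ → A
  | leaf, f, k => f k
  | node l r, f, k => op (evalFrom op l f k) (evalFrom op r f (k + l.size))

/-- The term operation induced by a bracketing `t` on a magma `(A, op)`;
the `i`-th variable (0-indexed) takes the value `f i`. -/
def termOp {A : Type*} (op : A → A → A) (t : BTree) (f : ℕ → A) : A :=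
  evalFrom op t f 0

/-- The depth sequence of the DFS tree `G(t)` of a bracketing `t`: the `i`-th
entry is the depth of the `i`-th variable (0-indexed) in `G(t)`. -/
def depths : BTree → List ℕ
  | leaf => [0]
  | node l r => l.depths ++ r.depths.map (· + 1)

/-- The depth of the `i`-th variable (0-indexed) in the DFS tree `G(t)`. -/
def depth (t : BTree) (i : ℕ) : ℕ := t.depths.getD i 0

/-- The height of the DFS tree `G(t)`: the maximum depth of a variable. -/
def height (t : BTree) : ℕ := t.depths.foldr max 0

/-- The edges of the DFS tree `G(t)`, the variables being indexed from the
given offset: `(p, c)` is an edge iff `x_p` is the parent of `x_c`. -/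
def edgesFrom : BTree → ℕ → List (ℕ × ℕ)
  | leaf, _ => []
  | node l r, k => (k, k + l.size) :: (l.edgesFrom k ++ r.edgesFrom (k + l.size))

/-- The edges of the DFS tree `G(t)` (variables indexed from `0`). -/
def edges (t : BTree) : List (ℕ × ℕ) := t.edgesFrom 0

end BTree

open Classical in
/-- The operation of the graph algebra of the digraph with vertex set `V` and
edge relation `E`; `none` plays the role of `∞`. -/
noncomputable def gaOp {V : Type*} (E : V → V → Prop) :
    Option V → Option V → Option V
  | some x, some y => if E x y then some x else none
  | _, _ => none

/-- The magma `(A, op)` satisfies the bracketing identity `t ≈ t'`. -/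
def Satisfies {A : Type*} (op : A → A → A) (t t' : BTree) : Prop :=
  ∀ f : ℕ → A, BTree.termOp op t f = BTree.termOp op t' f

/-- The `n`-th member `s_n` of the associative spectrum of the magma `(A, op)`:
the number of distinct term operations induced by bracketings of size `n`. -/
noncomputable def spectrum {A : Type*} (op : A → A → A) (n : ℕ) : ℕ :=
  Set.ncard {g : (ℕ → A) → A | ∃ t : BTree, t.size = n ∧ g = BTree.termOp op t}

/-- Reachability (by a walk) in the digraph with edge relation `E`. -/
def Reach {V : Type*} (E : V → V → Prop) : V → V → Prop :=
  Relation.ReflTransGen E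

/-- `u` and `v` lie in the same strongly connected component. -/
def SameSCC {V : Type*} (E : V → V → Prop) (u v : V) : Prop :=
  Reach E u v ∧ Reach E v u

/-- The strongly connected component of `v`, as a set of vertices. -/
def scc {V : Type*} (E : V → V → Prop) (v : V) : Set V :=
  {u | SameSCC E u v}

/-- `v` lies in a nontrivial strongly connected component (one carrying at
least one edge), i.e. `v` lies on a closed walk of positive length. -/
def InNontrivialSCC {V : Type*} (E : V → V → Prop) (v : V) : Prop :=
  ∃ u, E v u ∧ Reach E u v

/-- The induced subgraph on the set `K` (with the edge relation `E`) is an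
`m`-whirl: `K` is partitioned into blocks `B 0, …, B (m-1)` so that edges go
exactly from each block to the cyclically next one. -/
def IsWhirlOn {V : Type*} (E : V → V → Prop) (K : Set V) (m : ℕ) : Prop :=
  ∃ B : ZMod m → Set V,
    (∀ i, (B i).Nonempty) ∧
    (∀ i, B i ⊆ K) ∧
    (∀ x ∈ K, ∃! i, x ∈ B i) ∧
    (∀ x ∈ K, ∀ y ∈ K, (E x y ↔ ∃ i, x ∈ B i ∧ y ∈ B (i + 1)))

/-- `p 0 → p 1 → ⋯ → p len` is a path (a walk with pairwise distinct
vertices) in the digraph with edge relation `E`. -/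
def IsPath {V : Type*} (E : V → V → Prop) (len : ℕ) (p : ℕ → V) : Prop :=
  (∀ i < len, E (p i) (p (i + 1))) ∧
  (∀ i ≤ len, ∀ j ≤ len, p i = p j → i = j)

/-- The walk `p 0 → ⋯ → p len` is pleasant: all its vertices belong to
trivial strongly connected components. -/
def IsPleasant {V : Type*} (E : V → V → Prop) (len : ℕ) (p : ℕ → V) : Prop :=
  ∀ i ≤ len, ¬ InNontrivialSCC E (p i)

/-- The connected component `K` (of an undirected graph) is complete
bipartite: it splits into two nonempty parts with edges exactly between
vertices of different parts. -/
def IsCompleteBipartiteOn {V : Type*} (E : V → V → Prop) (K : Set V) : Prop :=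
  ∃ B1 B2 : Set V, B1.Nonempty ∧ B2.Nonempty ∧ B1 ∪ B2 = K ∧ B1 ∩ B2 = ∅ ∧
    ∀ x ∈ K, ∀ y ∈ K, (E x y ↔ (x ∈ B1 ∧ y ∈ B2) ∨ (x ∈ B2 ∧ y ∈ B1))

/-- A DFS tree of size `n`: a rooted directed tree on the vertices
`x₁, …, xₙ` (here `Fin n`, the root being `0`), given by its parent function,
such that the parent of every non-root vertex precedes it and the vertex set
of the induced subtree rooted at any vertex `i` is an interval `[i, i']`.
(The parent of the root is, by convention, the root itself.) -/
structure DFSTree (n : ℕ) where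
  parent : Fin n → Fin n
  parent_lt : ∀ i : Fin n, 0 < (i : ℕ) → (parent i : ℕ) < (i : ℕ)
  parent_root : ∀ i : Fin n, (i : ℕ) = 0 → parent i = i
  interval : ∀ i j k : Fin n, i ≤ j → j ≤ k →
    (∃ a : ℕ, parent^[a] k = i) → (∃ a : ℕ, parent^[a] j = i)

/-- The depth of the vertex `i` in a DFS tree: the length of the path from
the root to `i`. -/
noncomputable def DFSTree.depth {n : ℕ} (T : DFSTree n) (i : Fin n) : ℕ :=
  sInf {k : ℕ | (T.parent^[k] i : ℕ) = 0}

/-- The height of a DFS tree: the maximum depth of a vertex. -/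
noncomputable def DFSTree.height {n : ℕ} (T : DFSTree n) : ℕ :=
  Finset.univ.sup fun i => T.depth i

/-- The vertex `i` is a leaf (childless vertex) of the DFS tree `T`. -/
def DFSTree.IsLeaf {n : ℕ} (T : DFSTree n) (i : Fin n) : Prop :=
  ∀ j : Fin n, T.parent j = i → j = i

/-- `t_h(n)`: the number of DFS trees of size `n` of height at most `h`. -/
noncomputable def tcount (h n : ℕ) : ℕ :=
  Nat.card {T : DFSTree n // T.height ≤ h}

/-- `d` is a zag sequence: `d₁ = 0`, `d₂ = 1`, and
`1 ≤ d_{i+1} ≤ d_i + 1` for all `i` (1-indexed as in the paper;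
here `d : Fin n → ℕ` is 0-indexed). -/
def IsZag {n : ℕ} (d : Fin n → ℕ) : Prop :=
  (∀ h : 0 < n, d ⟨0, h⟩ = 0) ∧
  (∀ h : 1 < n, d ⟨1, h⟩ = 1) ∧
  (∀ i : ℕ, ∀ h : i + 1 < n,
    1 ≤ d ⟨i + 1, h⟩ ∧ d ⟨i + 1, h⟩ ≤ d ⟨i, Nat.lt_of_succ_lt h⟩ + 1)

/-- `M(t,t')`: the largest `m` such that the depth sequences of the DFS trees
of the bracketings `t` and `t'` are congruent modulo `m`. -/
noncomputable def Mval (t t' : BTree) : ℕ :=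
  sSup {m : ℕ | ∀ i < t.size, t.depth i ≡ t'.depth i [MOD m]}

section Aux
open BTree
def ZagList (L : List ℕ) : Prop :=
  L.head? = some 0 ∧ L.Chain' (fun a b => 1 ≤ b ∧ b ≤ a + 1)

lemma chain'_append_iff {α : Type*} {R : α → α → Prop} {l₁ l₂ : List α} :
    List.Chain' R (l₁ ++ l₂) ↔ List.Chain' R l₁ ∧ List.Chain' R l₂ ∧
      ∀ x ∈ l₁.getLast?, ∀ y ∈ l₂.head?, R x y := List.isChain_append

lemma chain'_map_iff {α β : Type*} {R : α → α → Prop} (f : β → α) {l : List β} :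
    List.Chain' R (l.map f) ↔ List.Chain' (fun a b : β => R (f a) (f b)) l := List.isChain_map f

lemma chain'_iff_get' {α : Type*} {R : α → α → Prop} {l : List α} :
    List.Chain' R l ↔ ∀ (i : ℕ) (h : i < l.length - 1),
      R (l.get ⟨i, by omega⟩) (l.get ⟨i + 1, by omega⟩) := by
  show List.IsChain R l ↔ _
  rw [List.isChain_iff_getElem]
  simp only [List.get_eq_getElem]
  constructor
  · intro h i hi; exact h i (by omega)
  · intro h i hi; exact h i (by omega)

lemma BTree.one_le_size (t : BTree) : 1 ≤ t.size := by
  induction t with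
  | leaf => exact le_refl _
  | node l r ihl ihr => simp only [size]; omega

lemma BTree.length_depths (t : BTree) : t.depths.length = t.size := by
  induction t with
  | leaf => rfl
  | node l r ihl ihr => simp [depths, size, ihl, ihr]

lemma BTree.depths_ne_nil (t : BTree) : t.depths ≠ [] := by
  intro h
  have h1 := t.length_depths
  have h2 := t.one_le_size
  rw [h] at h1
  simp at h1
  omega

lemma BTree.head?_depths (t : BTree) : t.depths.head? = some 0 := by
  induction t with
  | leaf => rfl
  | node l r ihl ihr =>
    simp [depths, List.head?_append, ihl]

lemma BTree.zagList_depths (t : BTree) : ZagList t.depths := by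
  induction t with
  | leaf => exact ⟨rfl, List.isChain_singleton _⟩
  | node l r ihl ihr =>
    refine ⟨?_, ?_⟩
    · simp [depths, List.head?_append, ihl.1]
    · rw [depths, chain'_append_iff]
      refine ⟨ihl.2, ?_, ?_⟩
      · rw [chain'_map_iff]
        exact ihr.2.imp (fun a b hab => by omega)
      · intro x hx y hy
        rw [List.head?_map, ihr.1] at hy
        simp at hy
        omega

lemma ZagList.getD_zero {L : List ℕ} (hL : ZagList L) : L.getD 0 0 = 0 := by
  have h := hL.1
  rw [List.head?_eq_getElem?] at h
  have hlen : 0 < L.length := by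
    cases L with
    | nil => simp at h
    | cons a l => simp
  rw [List.getD_eq_getElem _ _ hlen]
  have : L[0]? = some L[0] := List.getElem?_eq_getElem hlen
  rw [this] at h
  exact (Option.some_inj.mp h.symm).symm

lemma ZagList.succ {L : List ℕ} (hL : ZagList L) {i : ℕ} (h : i + 1 < L.length) :
    1 ≤ L.getD (i+1) 0 ∧ L.getD (i+1) 0 ≤ L.getD i 0 + 1 := by
  have := chain'_iff_get'.mp hL.2 i (by omega)
  rw [List.getD_eq_getElem _ _ h, List.getD_eq_getElem _ _ (by omega : i < L.length)]
  simpa [List.get_eq_getElem] using this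

lemma ZagList.getD_le {L : List ℕ} (hL : ZagList L) : ∀ i < L.length, L.getD i 0 ≤ i := by
  intro i
  induction i with
  | zero => intro _; rw [hL.getD_zero]
  | succ i ih =>
    intro h
    have h2 := (hL.succ h).2
    have := ih (by omega)
    omega

lemma BTree.depth_zero (t : BTree) : t.depth 0 = 0 := by
  have h := t.head?_depths
  rw [List.head?_eq_getElem?] at h
  have hlen : 0 < t.depths.length := by
    rw [length_depths]; exact t.one_le_size
  rw [depth, List.getD_eq_getElem _ _ hlen]
  rw [List.getElem?_eq_getElem hlen] at h
  exact Option.some_inj.mp h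

lemma BTree.depth_node_left (l r : BTree) {i : ℕ} (h : i < l.size) :
    (node l r).depth i = l.depth i := by
  rw [depth, depth, depths, List.getD_append _ _ _ _ (by rw [length_depths]; exact h)]

lemma BTree.depth_node_right (l r : BTree) {i : ℕ} (h : i < r.size) :
    (node l r).depth (l.size + i) = r.depth i + 1 := by
  rw [depth, depth, depths,
    List.getD_append_right _ _ _ _ (by rw [length_depths]; omega)]
  rw [length_depths]
  have : l.size + i - l.size = i := by omega
  rw [this]
  have hi : i < (r.depths.map (· + 1)).length := by
    rw [List.length_map, length_depths]; exact h
  rw [List.getD_eq_getElem _ _ hi, List.getElem_map,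
    List.getD_eq_getElem _ _ (by rw [length_depths]; exact h)]

/-- last entry of the depths list, with default. -/
def graft : BTree → ℕ → BTree
  | BTree.leaf, _ => BTree.node BTree.leaf BTree.leaf
  | BTree.node l r, v =>
    if v ≤ 1 then BTree.node (BTree.node l r) BTree.leaf
    else BTree.node l (graft r (v - 1))

lemma getLastD_append {L M : List ℕ} (h : M ≠ []) :
    (L ++ M).getLastD 0 = M.getLastD 0 := by
  rw [List.getLastD_eq_getLast?, List.getLastD_eq_getLast?, List.getLast?_append]
  cases hM : M.getLast? with
  | none => exact absurd (List.getLast?_eq_none_iff.mp hM) h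
  | some x => rfl

lemma getLastD_map_succ {L : List ℕ} (h : L ≠ []) :
    (L.map (· + 1)).getLastD 0 = L.getLastD 0 + 1 := by
  rw [List.getLastD_eq_getLast?, List.getLastD_eq_getLast?, List.getLast?_map]
  cases hM : L.getLast? with
  | none => exact absurd (List.getLast?_eq_none_iff.mp hM) h
  | some x => rfl

lemma getLastD_depths_node (l r : BTree) :
    (BTree.node l r).depths.getLastD 0 = r.depths.getLastD 0 + 1 := by
  rw [depths, getLastD_append (by simp [r.depths_ne_nil]), getLastD_map_succ r.depths_ne_nil]

lemma depths_graft (t : BTree) (v : ℕ) (h1 : 1 ≤ v)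
    (h2 : v ≤ t.depths.getLastD 0 + 1) :
    (graft t v).depths = t.depths ++ [v] := by
  induction t generalizing v with
  | leaf =>
    have : v = 1 := by simp [depths] at h2; omega
    subst this
    rfl
  | node l r ihl ihr =>
    rw [graft]
    by_cases hv : v ≤ 1
    · have : v = 1 := by omega
      subst this
      simp [depths]
    · rw [if_neg hv, depths, depths]
      have hb : v - 1 ≤ r.depths.getLastD 0 + 1 := by
        rw [getLastD_depths_node] at h2; omega
      rw [ihr (v - 1) (by omega) hb, List.map_append]
      have hv1 : v - 1 + 1 = v := by omega
      simp [hv1, List.append_assoc]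

lemma size_graft (t : BTree) (v : ℕ) : (graft t v).size = t.size + 1 := by
  induction t generalizing v with
  | leaf => rfl
  | node l r ihl ihr =>
    rw [graft]
    by_cases hv : v ≤ 1
    · rw [if_pos hv]; simp [size]
    · rw [if_neg hv]; simp [size, ihr]; omega

lemma zagList_append_elim {M : List ℕ} {v : ℕ} (hM : M ≠ [])
    (h : ZagList (M ++ [v])) :
    ZagList M ∧ 1 ≤ v ∧ v ≤ M.getLastD 0 + 1 := by
  obtain ⟨h1, h2⟩ := h
  rw [List.head?_append] at h1
  rw [chain'_append_iff] at h2
  obtain ⟨hc, -, hlink⟩ := h2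
  have hhd : M.head? = some 0 := by
    cases hm : M.head? with
    | none => exact absurd (List.head?_eq_none_iff.mp hm) hM
    | some x => rw [hm] at h1; simpa using h1
  have hlast : ∃ x, M.getLast? = some x := by
    cases hm : M.getLast? with
    | none => exact absurd (List.getLast?_eq_none_iff.mp hm) hM
    | some x => exact ⟨x, rfl⟩
  obtain ⟨x, hx⟩ := hlast
  have := hlink x (by rw [hx]; rfl) v (by rfl)
  refine ⟨⟨hhd, hc⟩, this.1, ?_⟩
  rw [List.getLastD_eq_getLast?, hx]
  exact this.2

lemma exists_btree_of_zagList : ∀ L : List ℕ, ZagList L → ∃ t : BTree, t.depths = L := by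
  intro L
  induction L using List.reverseRecOn with
  | nil => intro h; simp [ZagList] at h
  | append_singleton M v ih =>
    intro h
    rcases eq_or_ne M [] with hM | hM
    · subst hM
      have : v = 0 := by simpa [ZagList] using h.1
      subst this
      exact ⟨BTree.leaf, rfl⟩
    · obtain ⟨hzM, hv1, hv2⟩ := zagList_append_elim hM h
      obtain ⟨t, ht⟩ := ih hzM
      exact ⟨graft t v, by rw [depths_graft t v hv1 (by rw [ht]; exact hv2), ht]⟩

lemma zagList_range (n : ℕ) (hn : 1 ≤ n) : ZagList (List.range n) := by
  constructor
  · rw [List.head?_eq_getElem?]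
    rw [List.getElem?_eq_getElem (by rw [List.length_range]; omega)]
    simp
  · rw [chain'_iff_get']
    intro i h
    simp only [List.length_range] at h
    simp [List.get_eq_getElem]

lemma gaOp_pos {V : Type*} (E : V → V → Prop) {x y : V} (h : E x y) :
    gaOp E (some x) (some y) = some x := by simp [gaOp, h]

lemma gaOp_neg {V : Type*} (E : V → V → Prop) {x y : V} (h : ¬ E x y) :
    gaOp E (some x) (some y) = none := by simp [gaOp, h]

lemma gaOp_none_left {V : Type*} (E : V → V → Prop) (b : Option V) :
    gaOp E none b = none := rfl

lemma gaOp_none_right {V : Type*} (E : V → V → Prop) (a : Option V) :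
    gaOp E a none = none := by
  cases a <;> rfl

/-- all edge-constraints of `t` (at offset `k`) are satisfied by `f`. -/
def Ok {V : Type*} (E : V → V → Prop) (f : ℕ → Option V) (t : BTree) (k : ℕ) : Prop :=
  ∀ p c : ℕ, (p, c) ∈ t.edgesFrom k → ∃ x y, f p = some x ∧ f c = some y ∧ E x y

lemma ok_leaf {V : Type*} (E : V → V → Prop) (f : ℕ → Option V) (k : ℕ) :
    Ok E f BTree.leaf k := by
  intro p c h
  simp [edgesFrom] at h

lemma ok_node_iff {V : Type*} (E : V → V → Prop) (f : ℕ → Option V) (l r : BTree) (k : ℕ) :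
    Ok E f (BTree.node l r) k ↔
      (∃ x y, f k = some x ∧ f (k + l.size) = some y ∧ E x y) ∧
        Ok E f l k ∧ Ok E f r (k + l.size) := by
  constructor
  · intro h
    refine ⟨h k (k + l.size) (by simp [edgesFrom]), ?_, ?_⟩
    · intro p c hpc; exact h p c (by simp [edgesFrom, hpc])
    · intro p c hpc; exact h p c (by simp [edgesFrom, hpc])
  · rintro ⟨h0, hl, hr⟩ p c hpc
    simp only [edgesFrom, List.mem_cons, List.mem_append, Prod.mk.injEq] at hpc
    rcases hpc with ⟨rfl, rfl⟩ | h | h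
    · exact h0
    · exact hl p c h
    · exact hr p c h

lemma evalFrom_eq_of_ok {V : Type*} {E : V → V → Prop} {f : ℕ → Option V} :
    ∀ {t : BTree} {k : ℕ}, Ok E f t k → evalFrom (gaOp E) t f k = f k := by
  intro t
  induction t with
  | leaf => intro k _; rfl
  | node l r ihl ihr =>
    intro k h
    rw [ok_node_iff] at h
    obtain ⟨⟨x, y, hx, hy, hE⟩, hl, hr⟩ := h
    rw [evalFrom, ihl hl, ihr hr, hx, hy, gaOp_pos E hE]

lemma evalFrom_eq_none_of_not_ok {V : Type*} {E : V → V → Prop} {f : ℕ → Option V} :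
    ∀ {t : BTree} {k : ℕ}, ¬ Ok E f t k → evalFrom (gaOp E) t f k = none := by
  intro t
  induction t with
  | leaf => intro k h; exact absurd (ok_leaf E f k) h
  | node l r ihl ihr =>
    intro k h
    rw [ok_node_iff] at h
    rw [evalFrom]
    by_cases hl : Ok E f l k
    · by_cases hr : Ok E f r (k + l.size)
      · have h0 : ¬ ∃ x y, f k = some x ∧ f (k + l.size) = some y ∧ E x y :=
          fun hc => h ⟨hc, hl, hr⟩
        rw [evalFrom_eq_of_ok hl, evalFrom_eq_of_ok hr]
        rcases hk : f k with _ | x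
        · rw [gaOp_none_left]
        · rcases hk2 : f (k + l.size) with _ | y
          · rw [gaOp_none_right]
          · have hE : ¬ E x y := fun hE => h0 ⟨x, y, hk, hk2, hE⟩
            rw [gaOp_neg E hE]
      · rw [ihr hr, gaOp_none_right]
    · rw [ihl hl, gaOp_none_left]

lemma some_mk_eq {m : ℕ} {u v : ℕ} (h : u = v) (hu : u < m + 1) :
    (some (⟨u, hu⟩ : Fin (m+1)) : Option (Fin (m+1))) = some ⟨v, h ▸ hu⟩ := by
  subst h; rfl

lemma ok_iff (ℓ : ℕ) (f : ℕ → Option (Fin (ℓ+1))) :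
    ∀ (t : BTree) (k : ℕ) (a : Fin (ℓ+1)), f k = some a →
    (Ok (fun i j : Fin (ℓ+1) => (j : ℕ) = (i : ℕ) + 1) f t k ↔
      ∀ i < t.size, ∃ h : (a : ℕ) + t.depth i < ℓ + 1,
        f (k + i) = some ⟨(a : ℕ) + t.depth i, h⟩) := by
  intro t
  induction t with
  | leaf =>
    intro k a ha
    constructor
    · intro _ i hi
      have hi0 : i = 0 := by have : (BTree.leaf).size = 1 := rfl; omega
      subst hi0
      have hd : (BTree.leaf).depth 0 = 0 := rfl
      have hb : (a : ℕ) + (BTree.leaf).depth 0 < ℓ + 1 := by rw [hd]; simpa using a.isLt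
      refine ⟨hb, ?_⟩
      have hk0 : k + 0 = k := rfl
      rw [hk0, ha]
      exact congrArg some (Fin.ext (by simp [hd]))
    · intro _; exact ok_leaf _ f k
  | node l r ihl ihr =>
    intro k a ha
    have hsz : (BTree.node l r).size = l.size + r.size := rfl
    rw [ok_node_iff]
    constructor
    · rintro ⟨⟨x, y, hx, hy, hE⟩, hl, hr⟩
      have hxa : x = a := by rw [ha] at hx; exact (Option.some_inj.mp hx).symm
      subst hxa
      have hIl := (ihl k x ha).mp hl
      have hIr := (ihr (k + l.size) y hy).mp hr
      intro i hi
      by_cases hil : i < l.size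
      · obtain ⟨hb, hf⟩ := hIl i hil
        rw [depth_node_left l r hil]
        exact ⟨hb, hf⟩
      · have hi' : i - l.size < r.size := by omega
        obtain ⟨hb, hf⟩ := hIr (i - l.size) hi'
        have hieq : l.size + (i - l.size) = i := by omega
        have hdep := depth_node_right l r hi'
        rw [hieq] at hdep
        rw [hdep]
        have hval : (x : ℕ) + (r.depth (i - l.size) + 1) = (y : ℕ) + r.depth (i - l.size) := by
          omega
        refine ⟨by omega, ?_⟩
        have : k + l.size + (i - l.size) = k + i := by omega
        rw [this] at hf
        rw [hf]
        congr 1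
        exact Fin.ext (by simp; omega)
    · intro H
      have hr1 := r.one_le_size
      have hl1 := l.one_le_size
      have hdep1 : (BTree.node l r).depth l.size = 1 := by
        have h0 := depth_node_right l r (i := 0) (by omega)
        rw [Nat.add_zero] at h0
        rw [h0, r.depth_zero]
      obtain ⟨hb1, hf1⟩ := H l.size (by omega)
      have hb1' : (a : ℕ) + 1 < ℓ + 1 := by rw [hdep1] at hb1; exact hb1
      have hf1' : f (k + l.size) = some ⟨(a : ℕ) + 1, hb1'⟩ := by
        rw [hf1]; congr 1; exact Fin.ext (by simp [hdep1])
      refine ⟨⟨a, ⟨(a : ℕ) + 1, hb1'⟩, ha, hf1', rfl⟩, ?_, ?_⟩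
      · refine (ihl k a ha).mpr ?_
        intro i hil
        obtain ⟨hb, hf⟩ := H i (by omega)
        have hd := depth_node_left l r hil
        refine ⟨by rw [hd] at hb; exact hb, ?_⟩
        rw [hf]
        congr 1
        exact Fin.ext (by simp only [Fin.val_mk, hd])
      · refine (ihr (k + l.size) ⟨(a : ℕ) + 1, hb1'⟩ hf1').mpr ?_
        intro i hir
        obtain ⟨hb, hf⟩ := H (l.size + i) (by omega)
        have hd := depth_node_right l r hir
        refine ⟨by rw [hd] at hb; simp only [Fin.val_mk]; omega, ?_⟩
        have hki : k + (l.size + i) = k + l.size + i := by omega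
        rw [hki] at hf
        rw [hf]
        congr 1
        refine Fin.ext ?_
        simp only [Fin.val_mk, hd]
        omega

open Classical in
/-- canonical form of the term operation of a bracketing with depth list `L`. -/
noncomputable def G (ℓ n : ℕ) (L : List ℕ) :
    (ℕ → Option (Fin (ℓ+1))) → Option (Fin (ℓ+1)) :=
  fun f =>
    if ∃ a : ℕ, ∀ i < n, ∃ h : a + L.getD i 0 < ℓ + 1, f i = some ⟨a + L.getD i 0, h⟩
    then f 0 else none

open Classical in
lemma termOp_eq_G {ℓ n : ℕ} (t : BTree) (ht : t.size = n) :
    termOp (gaOp (fun i j : Fin (ℓ + 1) => (j : ℕ) = (i : ℕ) + 1)) t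
      = G ℓ n t.depths := by
  funext f
  show evalFrom (gaOp (fun i j : Fin (ℓ + 1) => (j : ℕ) = (i : ℕ) + 1)) t f 0 =
    if ∃ a : ℕ, ∀ i < n, ∃ h : a + t.depth i < ℓ + 1, f i = some ⟨a + t.depth i, h⟩
    then f 0 else none
  by_cases hc : ∃ a : ℕ, ∀ i < n,
      ∃ h : a + t.depth i < ℓ + 1, f i = some ⟨a + t.depth i, h⟩
  · rw [if_pos hc]
    obtain ⟨a, H⟩ := hc
    have h0 : 0 < n := by rw [← ht]; exact t.one_le_size
    obtain ⟨hb0, hf0⟩ := H 0 h0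
    have hd0 : t.depth 0 = 0 := t.depth_zero
    have ha : a < ℓ + 1 := by rw [hd0] at hb0; omega
    have hf0' : f 0 = some ⟨a, ha⟩ := by
      rw [hf0]; exact congrArg some (Fin.ext (by simp [hd0]))
    have hOk : Ok (fun i j : Fin (ℓ + 1) => (j : ℕ) = (i : ℕ) + 1) f t 0 := by
      refine (ok_iff ℓ f t 0 ⟨a, ha⟩ hf0').mpr ?_
      intro i hi
      obtain ⟨hb, hf⟩ := H i (by omega)
      refine ⟨by simpa using hb, ?_⟩
      rw [Nat.zero_add, hf]
    exact evalFrom_eq_of_ok hOk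
  · rw [if_neg hc]
    cases t with
    | leaf =>
      show f 0 = none
      rcases hf0 : f 0 with _ | b
      · rfl
      · exfalso
        apply hc
        refine ⟨(b : ℕ), ?_⟩
        intro i hi
        have h1 : n = 1 := by rw [← ht]; rfl
        have hi0 : i = 0 := by omega
        subst hi0
        have hd0 : (BTree.leaf).depth 0 = 0 := rfl
        have hbb := b.isLt
        refine ⟨by rw [hd0]; omega, ?_⟩
        rw [hf0]
        exact congrArg some (Fin.ext (by simp [hd0]))
    | node l r =>
      refine evalFrom_eq_none_of_not_ok ?_
      intro hOk
      apply hc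
      obtain ⟨⟨x, y, hx, hy, hE⟩, -, -⟩ := (ok_node_iff _ f l r 0).mp hOk
      have H := (ok_iff ℓ f (BTree.node l r) 0 x hx).mp hOk
      refine ⟨(x : ℕ), ?_⟩
      intro i hi
      obtain ⟨hb, hf⟩ := H i (by omega)
      rw [Nat.zero_add] at hf
      exact ⟨hb, hf⟩

lemma getD_le_of_forall {L : List ℕ} {ℓ : ℕ} (hL : ∀ x ∈ L, x ≤ ℓ) (i : ℕ) :
    L.getD i 0 ≤ ℓ := by
  by_cases h : i < L.length
  · rw [List.getD_eq_getElem _ _ h]; exact hL _ (List.getElem_mem h)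
  · rw [List.getD_eq_default _ _ (by omega)]; omega

/-- the canonical assignment associated with a bounded list. -/
noncomputable def canonF (ℓ : ℕ) (L : List ℕ) (hbd : ∀ x ∈ L, x ≤ ℓ) :
    ℕ → Option (Fin (ℓ+1)) :=
  fun i => some ⟨L.getD i 0, Nat.lt_succ_of_le (getD_le_of_forall hbd i)⟩

lemma G_canon {ℓ n : ℕ} {L : List ℕ} (hn : 1 ≤ n) (hlen : L.length = n)
    (hzag : ZagList L) (hbd : ∀ x ∈ L, x ≤ ℓ) :
    G ℓ n L (canonF ℓ L hbd) = some ⟨0, by omega⟩ := by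
  rw [G]
  rw [if_pos ?hc]
  case hc =>
    refine ⟨0, fun i hi => ⟨by have := getD_le_of_forall hbd i; omega, ?_⟩⟩
    rw [canonF]
    exact congrArg some (Fin.ext (by simp))
  rw [canonF]
  refine congrArg some (Fin.ext ?_)
  show L.getD 0 0 = 0
  exact hzag.getD_zero

lemma G_inj {ℓ n : ℕ} {L L' : List ℕ} (hn : 1 ≤ n)
    (hlen : L.length = n) (hzag : ZagList L) (hbd : ∀ x ∈ L, x ≤ ℓ)
    (hlen' : L'.length = n) (hzag' : ZagList L') (hbd' : ∀ x ∈ L', x ≤ ℓ)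
    (hG : G ℓ n L = G ℓ n L') : L = L' := by
  have h1 := G_canon hn hlen hzag hbd
  rw [hG] at h1
  by_cases hcond : ∃ a : ℕ, ∀ i < n,
      ∃ h : a + L'.getD i 0 < ℓ + 1,
        canonF ℓ L hbd i = some ⟨a + L'.getD i 0, h⟩
  · obtain ⟨a, H⟩ := hcond
    have key : ∀ i < n, L.getD i 0 = a + L'.getD i 0 := by
      intro i hi
      obtain ⟨hb, hf⟩ := H i hi
      rw [canonF] at hf
      have := Option.some_inj.mp hf
      exact congrArg Fin.val this
    have ha : a = 0 := by
      have h0 := key 0 hn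
      rw [hzag.getD_zero, hzag'.getD_zero] at h0
      omega
    subst ha
    refine List.ext_getElem (by omega) ?_
    intro i h1i h2i
    have := key i (by omega)
    rw [List.getD_eq_getElem _ _ h1i, List.getD_eq_getElem _ _ h2i] at this
    omega
  · rw [G, if_neg hcond] at h1
    exact absurd h1 (by simp)

lemma G_bad {ℓ n : ℕ} {L : List ℕ} (hlen : L.length = n)
    (hbad : ∃ x ∈ L, ℓ < x) : G ℓ n L = fun _ => none := by
  funext f
  rw [G]
  refine if_neg ?_
  rintro ⟨a, H⟩
  obtain ⟨x, hx, hxl⟩ := hbad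
  obtain ⟨i0, hi0, hget⟩ := List.mem_iff_getElem.mp hx
  obtain ⟨hb, -⟩ := H i0 (by omega)
  rw [List.getD_eq_getElem _ _ hi0, hget] at hb
  omega

section DFS
variable {n : ℕ}

lemma exists_iter_root (T : DFSTree n) :
    ∀ (m : ℕ) (i : Fin n), (i : ℕ) ≤ m → ∃ k, (T.parent^[k] i : ℕ) = 0 := by
  intro m
  induction m with
  | zero => intro i h; exact ⟨0, by simpa using h⟩
  | succ m ih =>
    intro i h
    by_cases h0 : (i : ℕ) = 0
    · exact ⟨0, h0⟩
    · obtain ⟨k, hk⟩ := ih (T.parent i)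
        (by have := T.parent_lt i (by omega); omega)
      exact ⟨k + 1, by rw [Function.iterate_succ_apply]; exact hk⟩

lemma depth_set_nonempty (T : DFSTree n) (i : Fin n) :
    {k : ℕ | (T.parent^[k] i : ℕ) = 0}.Nonempty :=
  exists_iter_root T (i : ℕ) i le_rfl

lemma depth_spec (T : DFSTree n) (i : Fin n) :
    (T.parent^[T.depth i] i : ℕ) = 0 :=
  Nat.sInf_mem (depth_set_nonempty T i)

lemma depth_le (T : DFSTree n) (i : Fin n) {k : ℕ}
    (h : (T.parent^[k] i : ℕ) = 0) : T.depth i ≤ k :=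
  Nat.sInf_le h

lemma depth_eq_zero_iff (T : DFSTree n) (i : Fin n) :
    T.depth i = 0 ↔ (i : ℕ) = 0 := by
  constructor
  · intro h
    have := depth_spec T i
    rw [h] at this
    simpa using this
  · intro h
    exact le_antisymm (depth_le T i (by simpa using h)) (Nat.zero_le _)

lemma depth_parent (T : DFSTree n) (i : Fin n) (h : 0 < (i : ℕ)) :
    T.depth i = T.depth (T.parent i) + 1 := by
  refine le_antisymm ?_ ?_
  · refine depth_le T i ?_
    rw [Function.iterate_succ_apply]
    exact depth_spec T (T.parent i)
  · have hne : T.depth i ≠ 0 := by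
      rw [Ne, depth_eq_zero_iff]; omega
    obtain ⟨m, hm⟩ : ∃ m, T.depth i = m + 1 := ⟨T.depth i - 1, by omega⟩
    have := depth_spec T i
    rw [hm, Function.iterate_succ_apply] at this
    have := depth_le T (T.parent i) this
    omega

lemma depth_parent_le (T : DFSTree n) (i : Fin n) :
    T.depth (T.parent i) ≤ T.depth i := by
  by_cases h : 0 < (i : ℕ)
  · rw [depth_parent T i h]; omega
  · rw [T.parent_root i (by omega)]

lemma depth_iter_le (T : DFSTree n) :
    ∀ (a : ℕ) (i : Fin n), T.depth (T.parent^[a] i) ≤ T.depth i := by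
  intro a
  induction a with
  | zero => intro i; exact le_rfl
  | succ a ih =>
    intro i
    rw [Function.iterate_succ_apply]
    exact le_trans (ih (T.parent i)) (depth_parent_le T i)

lemma depth_lt_of_iter (T : DFSTree n) {a : ℕ} {j p : Fin n}
    (h : T.parent^[a] j = p) (hne : p ≠ j) : T.depth p < T.depth j := by
  cases a with
  | zero => exact absurd h.symm hne
  | succ a =>
    have hj0 : (j : ℕ) ≠ 0 := by
      intro h0
      have hfix := T.parent_root j h0
      rw [Function.iterate_fixed hfix] at h
      exact hne h.symm
    rw [Function.iterate_succ_apply] at h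
    have h1 : T.depth p ≤ T.depth (T.parent j) := h ▸ depth_iter_le T a (T.parent j)
    have h2 := depth_parent T j (by omega)
    omega

lemma depth_zag_step (T : DFSTree n) (i : ℕ) (h : i + 1 < n) :
    1 ≤ T.depth ⟨i + 1, h⟩ ∧
      T.depth ⟨i + 1, h⟩ ≤ T.depth ⟨i, Nat.lt_of_succ_lt h⟩ + 1 := by
  constructor
  · have : T.depth ⟨i+1, h⟩ ≠ 0 := by
      rw [Ne, depth_eq_zero_iff]; simp
    omega
  · set k : Fin n := ⟨i + 1, h⟩
    set j : Fin n := ⟨i, Nat.lt_of_succ_lt h⟩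
    have hpk : (T.parent k : ℕ) < i + 1 := T.parent_lt k (by simp [k])
    obtain ⟨a, ha⟩ := T.interval (T.parent k) j k
      (by simp [Fin.le_def, j]; omega) (by simp [Fin.le_def, j, k])
      ⟨1, by simp⟩
    have h1 : T.depth (T.parent k) ≤ T.depth j := ha ▸ depth_iter_le T a j
    have h2 := depth_parent T k (by simp [k])
    omega

lemma parent_char (T : DFSTree n) (k : Fin n) (hk : 0 < (k : ℕ)) :
    ∀ j : Fin n, (T.parent k : ℕ) < (j : ℕ) → (j : ℕ) < (k : ℕ) →
      T.depth j ≠ T.depth k - 1 := by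
  intro j h1 h2 hdj
  obtain ⟨a, ha⟩ := T.interval (T.parent k) j k
    (by rw [Fin.le_def]; omega) (by rw [Fin.le_def]; omega) ⟨1, by simp⟩
  have hne : T.parent k ≠ j := by
    intro h; rw [h] at h1; omega
  have := depth_lt_of_iter T ha hne
  have := depth_parent T k hk
  omega

lemma eq_of_depth_eq (T T' : DFSTree n) (h : ∀ i, T.depth i = T'.depth i) :
    T = T' := by
  have hpar : T.parent = T'.parent := by
    funext k
    by_cases hk : 0 < (k : ℕ)
    · have c1 := parent_char T k hk
      have c2 := parent_char T' k hk
      have d1 := depth_parent T k hk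
      have d2 := depth_parent T' k hk
      have l1 := T.parent_lt k hk
      have l2 := T'.parent_lt k hk
      rcases Nat.lt_trichotomy (T.parent k : ℕ) (T'.parent k : ℕ) with hlt | heq | hgt
      · exfalso
        refine c1 (T'.parent k) hlt l2 ?_
        rw [h, h] at d1 ⊢
        omega
      · exact Fin.ext heq
      · exfalso
        refine c2 (T.parent k) hgt l1 ?_
        rw [← h, ← h] at d2 ⊢
        omega
    · rw [T.parent_root k (by omega), T'.parent_root k (by omega)]
  cases T; cases T'
  simp only at hpar
  subst hpar
  rfl

end DFS

/-! ### building a DFS tree from a zag sequence -/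

/-- parent function built from a depth sequence. -/
def par (d : ℕ → ℕ) (k : ℕ) : ℕ := Nat.findGreatest (fun j => d j = d k - 1) (k - 1)

lemma par_le (d : ℕ → ℕ) (k : ℕ) : par d k ≤ k :=
  le_trans (Nat.findGreatest_le _) (by omega)

lemma par_lt (d : ℕ → ℕ) {k : ℕ} (hk : 1 ≤ k) : par d k < k :=
  lt_of_le_of_lt (Nat.findGreatest_le _) (by omega)

lemma par_zero (d : ℕ → ℕ) : par d 0 = 0 := by
  have := par_le d 0; omega

section Build
variable {d : ℕ → ℕ} {n : ℕ}

variable (hd0 : d 0 = 0)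
variable (hz1 : ∀ k, 1 ≤ k → k < n → 1 ≤ d k)
variable (hz2 : ∀ i, i + 1 < n → d (i + 1) ≤ d i + 1)

include hd0 hz2 in
lemma ivt : ∀ i < n, ∀ v ≤ d i, ∃ j ≤ i, d j = v := by
  intro i
  induction i with
  | zero => intro _ v hv; rw [hd0] at hv; exact ⟨0, le_refl 0, by omega⟩
  | succ i ih =>
    intro hi v hv
    by_cases hvi : v ≤ d i
    · obtain ⟨j, hj1, hj2⟩ := ih (by omega) v hvi
      exact ⟨j, by omega, hj2⟩
    · have := hz2 i hi
      exact ⟨i + 1, le_refl _, by omega⟩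

include hd0 hz2 in
lemma par_spec {k : ℕ} (h1 : 1 ≤ k) (h2 : k < n) : d (par d k) = d k - 1 := by
  have hle : d k - 1 ≤ d (k - 1) := by
    have h := hz2 (k - 1) (by omega)
    have hk1 : k - 1 + 1 = k := by omega
    rw [hk1] at h
    omega
  obtain ⟨j, hj1, hj2⟩ := ivt hd0 hz2 (k - 1) (by omega) (d k - 1) hle
  exact Nat.findGreatest_spec (P := fun j => d j = d k - 1) hj1 hj2

lemma par_max {k j : ℕ} (h1 : par d k < j) (h2 : j ≤ k - 1) : d j ≠ d k - 1 :=
  Nat.findGreatest_is_greatest (P := fun j => d j = d k - 1) h1 h2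

include hd0 hz1 hz2 in
lemma par_gap {k : ℕ} (h1k : 1 ≤ k) (hkn : k < n) :
    ∀ j, par d k < j → j < k → d k ≤ d j := by
  have hdk : 1 ≤ d k := hz1 k h1k hkn
  have key : ∀ m j, k - j = m → par d k < j → j < k → d k ≤ d j := by
    intro m
    induction m using Nat.strong_induction_on with
    | _ m ih =>
      intro j hm h1 h2
      by_cases hj : j = k - 1
      · subst hj
        have hs : d k ≤ d (k - 1) + 1 := by
          have h := hz2 (k - 1) (by omega)
          have hk1 : k - 1 + 1 = k := by omega
          rw [hk1] at h
          omega
        have hne : d (k - 1) ≠ d k - 1 := par_max h1 le_rfl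
        omega
      · have h2' : j + 1 < k := by omega
        have hd1 : d k ≤ d (j + 1) :=
          ih (k - (j + 1)) (by omega) (j + 1) rfl (by omega) h2'
        have hs := hz2 j (by omega)
        have hne : d j ≠ d k - 1 := par_max h1 (by omega)
        omega
  exact fun j h1 h2 => key (k - j) j rfl h1 h2

include hd0 hz1 hz2 in
lemma anc_forward :
    ∀ (a k : ℕ), k < n → ∀ i, (par d)^[a] k = i →
      i ≤ k ∧ ∀ j, i < j → j ≤ k → d i < d j := by
  intro a
  induction a with
  | zero =>
    intro k hk i hi
    simp only [Function.iterate_zero, id_eq] at hi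
    subst hi
    exact ⟨le_rfl, fun j h1 h2 => by omega⟩
  | succ a ih =>
    intro k hk i hi
    rw [Function.iterate_succ_apply] at hi
    by_cases hk0 : k = 0
    · subst hk0
      rw [par_zero] at hi
      have hfix : (par d)^[a] 0 = 0 := Function.iterate_fixed (par_zero d) a
      rw [hfix] at hi
      subst hi
      exact ⟨le_rfl, fun j h1 h2 => by omega⟩
    · have h1k : 1 ≤ k := by omega
      have hpk : par d k < k := par_lt d h1k
      obtain ⟨hip, H⟩ := ih (par d k) (by omega) i hi
      have hdk : 1 ≤ d k := hz1 k h1k hk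
      have hps : d (par d k) = d k - 1 := par_spec hd0 hz2 h1k hk
      have hdip : d i ≤ d (par d k) := by
        rcases eq_or_lt_of_le hip with rfl | hlt
        · exact le_rfl
        · exact le_of_lt (H (par d k) hlt le_rfl)
      refine ⟨by omega, ?_⟩
      intro j hij hjk
      by_cases hjp : j ≤ par d k
      · exact H j hij hjp
      · by_cases hjk' : j = k
        · subst hjk'; omega
        · have := par_gap hd0 hz1 hz2 h1k hk j (by omega) (by omega)
          omega

include hd0 hz1 hz2 in
lemma anc_backward :
    ∀ k, k < n → ∀ i ≤ k, (∀ j, i < j → j ≤ k → d i < d j) →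
      ∃ a, (par d)^[a] k = i := by
  intro k
  induction k using Nat.strong_induction_on with
  | _ k ihk =>
    intro hk i hik H
    rcases eq_or_lt_of_le hik with rfl | hlt
    · exact ⟨0, rfl⟩
    · have h1k : 1 ≤ k := by omega
      have hps : d (par d k) = d k - 1 := par_spec hd0 hz2 h1k hk
      have hpk : par d k < k := par_lt d h1k
      have hdik : d i < d k := H k hlt le_rfl
      have hip : i ≤ par d k := by
        by_contra hcon
        push_neg at hcon
        have := par_gap hd0 hz1 hz2 h1k hk i hcon hlt
        omega
      rcases eq_or_lt_of_le hip with heq | hip'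
      · exact ⟨1, by simpa using heq.symm⟩
      · obtain ⟨a, ha⟩ := ihk (par d k) hpk (by omega) i (by omega)
          (fun j hj1 hj2 => H j hj1 (by omega))
        exact ⟨a + 1, by rw [Function.iterate_succ_apply]; exact ha⟩

end Build

/-- The DFS tree built from a suitable depth function. -/
noncomputable def buildT (f : ℕ → ℕ) (m : ℕ)
    (hf0 : f 0 = 0)
    (hf1 : ∀ k, 1 ≤ k → k < m → 1 ≤ f k)
    (hf2 : ∀ i, i + 1 < m → f (i + 1) ≤ f i + 1) : DFSTree m where
  parent := fun k => ⟨par f (k : ℕ), lt_of_le_of_lt (par_le f _) k.isLt⟩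
  parent_lt := fun k hk => par_lt f hk
  parent_root := fun k hk => Fin.ext (by simp [hk, par_zero])
  interval := by
    intro i j k hij hjk ⟨a, ha⟩
    have hval : ∀ (b : ℕ) (x : Fin m),
        (((fun k : Fin m => (⟨par f (k : ℕ), lt_of_le_of_lt (par_le f _) k.isLt⟩ : Fin m))^[b] x : Fin m) : ℕ)
          = (par f)^[b] (x : ℕ) := by
      intro b
      induction b with
      | zero => intro x; rfl
      | succ b ihb =>
        intro x
        rw [Function.iterate_succ_apply, Function.iterate_succ_apply]
        exact ihb _
    have hav : (par f)^[a] (k : ℕ) = (i : ℕ) := by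
      rw [← hval a k]
      exact congrArg Fin.val ha
    obtain ⟨-, H⟩ := anc_forward hf0 hf1 hf2 a (k : ℕ) k.isLt (i : ℕ) hav
    obtain ⟨a', ha'⟩ := anc_backward hf0 hf1 hf2 (j : ℕ) j.isLt (i : ℕ)
      (by rwa [← Fin.le_def]) (fun m hm1 hm2 => H m hm1 (by have := Fin.le_def.mp hjk; omega))
    refine ⟨a', Fin.ext ?_⟩
    rw [hval a' j]
    exact ha'



lemma buildT_depth {d : ℕ → ℕ} {n : ℕ}
    (hd0 : d 0 = 0)
    (hz1 : ∀ k, 1 ≤ k → k < n → 1 ≤ d k)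
    (hz2 : ∀ i, i + 1 < n → d (i + 1) ≤ d i + 1)
    (k : Fin n) : (buildT d n hd0 hz1 hz2).depth k = d (k : ℕ) := by
  have hval : ∀ (b : ℕ) (x : Fin n),
      (((buildT d n hd0 hz1 hz2).parent^[b] x : Fin n) : ℕ) = (par d)^[b] (x : ℕ) := by
    intro b
    induction b with
    | zero => intro x; rfl
    | succ b ihb =>
      intro x
      rw [Function.iterate_succ_apply, Function.iterate_succ_apply]
      exact ihb _
  have dzero : ∀ x < n, d x = 0 → x = 0 := by
    intro x hx hdx
    by_contra hcon
    have := hz1 x (by omega) hx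
    omega
  have iter_d : ∀ m, m ≤ d (k : ℕ) →
      d ((par d)^[m] (k : ℕ)) = d (k : ℕ) - m ∧ (par d)^[m] (k : ℕ) < n := by
    intro m
    induction m with
    | zero =>
      intro _
      simp only [Function.iterate_zero, id_eq]
      exact ⟨by omega, k.isLt⟩
    | succ m ihm =>
      intro hm
      obtain ⟨hdx, hxn⟩ := ihm (by omega)
      set x := (par d)^[m] (k : ℕ) with hxdef
      have hx1 : 1 ≤ x := by
        by_contra hcon
        have hx0 : x = 0 := by omega
        rw [hx0, hd0] at hdx
        omega
      have hps : d (par d x) = d x - 1 := par_spec hd0 hz2 hx1 hxn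
      rw [Function.iterate_succ_apply', ← hxdef]
      exact ⟨by omega, lt_trans (par_lt d hx1) hxn⟩
  refine le_antisymm ?_ ?_
  · refine depth_le _ k ?_
    rw [hval]
    obtain ⟨hdx, hxn⟩ := iter_d (d (k : ℕ)) le_rfl
    have : d (k : ℕ) - d (k : ℕ) = 0 := by omega
    rw [this] at hdx
    exact dzero _ hxn hdx
  · set T := buildT d n hd0 hz1 hz2
    have hmem := depth_spec T k
    rw [hval] at hmem
    by_contra hcon
    push_neg at hcon
    obtain ⟨hdx, -⟩ := iter_d (T.depth k) (by omega)
    rw [hmem, hd0] at hdx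
    omega




/-- the depth list of a DFS tree. -/
noncomputable def depthList {n : ℕ} (T : DFSTree n) : List ℕ :=
  List.ofFn (fun i => T.depth i)

lemma depthList_length {n : ℕ} (T : DFSTree n) : (depthList T).length = n := by
  simp [depthList]

lemma depthList_getElem {n : ℕ} (T : DFSTree n) {i : ℕ} (h : i < n) :
    (depthList T)[i]'(by rw [depthList_length]; exact h) = T.depth ⟨i, h⟩ := by
  simp [depthList]

lemma depthList_zag {n : ℕ} (hn : 1 ≤ n) (T : DFSTree n) : ZagList (depthList T) := by
  constructor
  · rw [List.head?_eq_getElem?,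
      List.getElem?_eq_getElem (by rw [depthList_length]; omega : 0 < (depthList T).length),
      depthList_getElem T (by omega : 0 < n)]
    have : T.depth ⟨0, by omega⟩ = 0 := (depth_eq_zero_iff T _).mpr rfl
    rw [this]
  · rw [chain'_iff_get']
    intro i hlt
    rw [depthList_length] at hlt
    have h1 : i + 1 < n := by omega
    rw [List.get_eq_getElem, List.get_eq_getElem, depthList_getElem T (by omega : i < n),
      depthList_getElem T h1]
    exact depth_zag_step T i h1

lemma height_le_iff {n ℓ : ℕ} (T : DFSTree n) :
    T.height ≤ ℓ ↔ ∀ i, T.depth i ≤ ℓ := by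
  rw [DFSTree.height, Finset.sup_le_iff]
  simp

lemma depthList_bdd {n ℓ : ℕ} {T : DFSTree n} (h : T.height ≤ ℓ) :
    ∀ x ∈ depthList T, x ≤ ℓ := by
  intro x hx
  rw [depthList, List.mem_ofFn] at hx
  obtain ⟨i, rfl⟩ := hx
  exact (height_le_iff T).mp h i

lemma tcount_eq (ℓ n : ℕ) (hn : 1 ≤ n) :
    tcount ℓ n
      = Set.ncard {L : List ℕ | L.length = n ∧ ZagList L ∧ ∀ x ∈ L, x ≤ ℓ} := by
  rw [tcount, ← Nat.card_coe_set_eq]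
  refine Nat.card_congr (Equiv.ofBijective
    (fun T => ⟨depthList T.1, depthList_length T.1, depthList_zag hn T.1,
      depthList_bdd T.2⟩) ⟨?_, ?_⟩)
  · rintro ⟨T1, h1⟩ ⟨T2, h2⟩ hEq
    simp only [Subtype.mk.injEq, depthList, List.ofFn_inj] at hEq
    refine Subtype.ext (eq_of_depth_eq T1 T2 (fun i => congrFun hEq i))
  · rintro ⟨L, hlen, hzag, hbd⟩
    set d : ℕ → ℕ := fun i => L.getD i 0 with hd
    have hd0 : d 0 = 0 := hzag.getD_zero
    have hz1 : ∀ k, 1 ≤ k → k < n → 1 ≤ d k := by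
      intro k h1 h2
      obtain ⟨m, rfl⟩ : ∃ m, k = m + 1 := ⟨k - 1, by omega⟩
      exact (hzag.succ (by omega)).1
    have hz2 : ∀ i, i + 1 < n → d (i + 1) ≤ d i + 1 := by
      intro i h
      exact (hzag.succ (by omega)).2
    refine ⟨⟨buildT d n hd0 hz1 hz2, ?_⟩, ?_⟩
    · rw [height_le_iff]
      intro i
      rw [buildT_depth hd0 hz1 hz2 i]
      exact getD_le_of_forall hbd _
    · refine Subtype.ext ?_
      show depthList _ = L
      refine List.ext_getElem (by rw [depthList_length, hlen]) ?_
      intro i hi1 hi2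
      rw [depthList_length] at hi1
      rw [depthList_getElem _ hi1, buildT_depth hd0 hz1 hz2]
      simp only [hd, Fin.val_mk]
      exact (List.getD_eq_getElem L 0 hi2)


/-! ### final counting -/

section Main
open BTree

lemma zag_entries_le {ℓ n : ℕ} {L : List ℕ} (hzag : ZagList L) (hlen : L.length = n)
    (hle : n ≤ ℓ + 1) : ∀ x ∈ L, x ≤ ℓ := by
  intro x hx
  obtain ⟨i, hi, rfl⟩ := List.mem_iff_getElem.mp hx
  have h2 := hzag.getD_le i hi
  rw [List.getD_eq_getElem _ _ hi] at h2
  omega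

lemma zgood_finite (ℓ n : ℕ) :
    {L : List ℕ | L.length = n ∧ ZagList L ∧ ∀ x ∈ L, x ≤ ℓ}.Finite := by
  have hsub : {L : List ℕ | L.length = n ∧ ZagList L ∧ ∀ x ∈ L, x ≤ ℓ}
      ⊆ (fun v : Fin n → Fin (ℓ+1) => List.ofFn (fun i => (v i : ℕ))) '' Set.univ := by
    rintro L ⟨hlen, hzag, hbd⟩
    refine ⟨fun i => ⟨L.getD i 0, Nat.lt_succ_of_le (getD_le_of_forall hbd i)⟩,
      trivial, ?_⟩
    refine List.ext_getElem (by simp [hlen]) ?_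
    intro i h1 h2
    rw [List.getElem_ofFn]
    exact List.getD_eq_getElem L 0 h2
  exact Set.Finite.subset (Set.finite_univ.image _) hsub

lemma spectrum_small (ℓ n : ℕ) (hn : 1 ≤ n) (hle : n ≤ ℓ + 1) :
    spectrum (gaOp (fun i j : Fin (ℓ + 1) => (j : ℕ) = (i : ℕ) + 1)) n
      = tcount ℓ n := by
  rw [spectrum, tcount_eq ℓ n hn]
  have hset : {g : (ℕ → Option (Fin (ℓ+1))) → Option (Fin (ℓ+1)) |
      ∃ t : BTree, t.size = n ∧
        g = BTree.termOp (gaOp (fun i j : Fin (ℓ + 1) => (j : ℕ) = (i : ℕ) + 1)) t}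
      = G ℓ n '' {L : List ℕ | L.length = n ∧ ZagList L ∧ ∀ x ∈ L, x ≤ ℓ} := by
    ext g
    constructor
    · rintro ⟨t, hts, rfl⟩
      have hlen : t.depths.length = n := by rw [t.length_depths, hts]
      exact ⟨t.depths, ⟨hlen, t.zagList_depths,
        zag_entries_le t.zagList_depths hlen hle⟩, (termOp_eq_G t hts).symm⟩
    · rintro ⟨L, ⟨hlen, hzag, hbd⟩, rfl⟩
      obtain ⟨t, rfl⟩ := exists_btree_of_zagList L hzag
      have hts : t.size = n := by rw [← t.length_depths]; exact hlen
      exact ⟨t, hts, (termOp_eq_G t hts).symm⟩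
  rw [hset]
  exact Set.ncard_image_of_injOn
    (fun L hL L' hL' h => G_inj hn hL.1 hL.2.1 hL.2.2 hL'.1 hL'.2.1 hL'.2.2 h)

lemma spectrum_large (ℓ n : ℕ) (hge : ℓ + 2 ≤ n) :
    spectrum (gaOp (fun i j : Fin (ℓ + 1) => (j : ℕ) = (i : ℕ) + 1)) n
      = tcount ℓ n + 1 := by
  have hn : 1 ≤ n := by omega
  rw [spectrum, tcount_eq ℓ n hn]
  have hset : {g : (ℕ → Option (Fin (ℓ+1))) → Option (Fin (ℓ+1)) |
      ∃ t : BTree, t.size = n ∧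
        g = BTree.termOp (gaOp (fun i j : Fin (ℓ + 1) => (j : ℕ) = (i : ℕ) + 1)) t}
      = insert (fun _ => none)
          (G ℓ n '' {L : List ℕ | L.length = n ∧ ZagList L ∧ ∀ x ∈ L, x ≤ ℓ}) := by
    ext g
    constructor
    · rintro ⟨t, hts, rfl⟩
      have hlen : t.depths.length = n := by rw [t.length_depths, hts]
      by_cases hbd : ∀ x ∈ t.depths, x ≤ ℓ
      · exact Set.mem_insert_of_mem _
          ⟨t.depths, ⟨hlen, t.zagList_depths, hbd⟩, (termOp_eq_G t hts).symm⟩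
      · push_neg at hbd
        obtain ⟨x, hx1, hx2⟩ := hbd
        refine Set.mem_insert_iff.mpr (Or.inl ?_)
        rw [termOp_eq_G t hts]
        exact G_bad hlen ⟨x, hx1, hx2⟩
    · intro hg
      rcases Set.mem_insert_iff.mp hg with rfl | ⟨L, ⟨hlen, hzag, hbd⟩, rfl⟩
      · obtain ⟨t, ht⟩ := exists_btree_of_zagList (List.range n) (zagList_range n hn)
        have hts : t.size = n := by rw [← t.length_depths, ht]; simp
        refine ⟨t, hts, ?_⟩
        rw [termOp_eq_G t hts, ht]
        refine (G_bad (by simp) ⟨n - 1, List.mem_range.mpr (by omega), by omega⟩).symm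
      · obtain ⟨t, rfl⟩ := exists_btree_of_zagList L hzag
        have hts : t.size = n := by rw [← t.length_depths]; exact hlen
        exact ⟨t, hts, (termOp_eq_G t hts).symm⟩
  have hnm : (fun _ => none) ∉
      (G ℓ n '' {L : List ℕ | L.length = n ∧ ZagList L ∧ ∀ x ∈ L, x ≤ ℓ}) := by
    rintro ⟨L, ⟨hlen, hzag, hbd⟩, hG⟩
    have hc := G_canon hn hlen hzag hbd
    rw [hG] at hc
    exact absurd hc (by simp)
  rw [hset, Set.ncard_insert_of_notMem hnm ((zgood_finite ℓ n).image _),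
    Set.ncard_image_of_injOn
      (fun L hL L' hL' h => G_inj hn hL.1 hL.2.1 hL.2.2 hL'.1 hL'.2.1 hL'.2.2 h)]

end Main

end Aux

end AssocSpec
open AssocSpec in
/-- For the directed path `v₀ → v₁ → ⋯ → v_ℓ` of length `ℓ`,
the associative spectrum of the graph algebra is `s_n = t_ℓ(n)` for
`n ≤ ℓ + 1` and `s_n = t_ℓ(n) + 1` for `n ≥ ℓ + 2`, where `t_h(n)` is the
number of DFS trees of size `n` of height at most `h`. -/
theorem stmt4 (ℓ : ℕ) (n : ℕ) (hn : 1 ≤ n) :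
    (n ≤ ℓ + 1 →
      spectrum (gaOp (fun i j : Fin (ℓ + 1) => (j : ℕ) = (i : ℕ) + 1)) n
        = tcount ℓ n) ∧
    (ℓ + 2 ≤ n →
      spectrum (gaOp (fun i j : Fin (ℓ + 1) => (j : ℕ) = (i : ℕ) + 1)) n
        = tcount ℓ n + 1) :=
  ⟨fun hle => spectrum_small ℓ n hn hle, fun hge => spectrum_large ℓ n hge⟩
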